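/- Let a, λ, L, K, r₀ ∈ ℝ with K > 0, λ ≥ 0 and a²λ < 1. Set χ = 1 + a²λ, Δ(r) = (1 − λr²)(r² + a²) − 2r with derivative Δ'(r), and R(r) = χ²a²L² − K·Δ(r) (the radial null-geodesic potential with E = 0). Then: (a) if R(r₀) = 0 and R'(r₀) = 0, then Δ'(r₀) = 0 and K·Δ(r₀) = χ²a²L²; (b) if moreover there exists θ ∈ (0, π) such that K(1 + a²λ cos²θ) − χ²L²/sin²θ ≥ 0, then χ²L² ≤ K, and consequently Δ(r₀) ≤ a². -/
import Mathlib


/-- Exclusion of `E = 0` double roots of the Kerr–de Sitter radial null-geodesic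
potential: (a) a double root forces `Δ'(r₀) = 0` and `K·Δ(r₀) = χ²a²L²`; (b) if moreover
the angular potential is somewhere nonnegative, then `χ²L² ≤ K` and `Δ(r₀) ≤ a²`. -/
theorem zero_energy_double_root
    (a lam L K r₀ : ℝ) (hK : 0 < K) (hlam : 0 ≤ lam) (ha : a ^ 2 * lam < 1)
    (χ : ℝ) (hχ : χ = 1 + a ^ 2 * lam)
    (Δ Δ' R R' : ℝ → ℝ)
    (hΔ : ∀ r, Δ r = (1 - lam * r ^ 2) * (r ^ 2 + a ^ 2) - 2 * r)
    (hΔ' : ∀ r, Δ' r = 2 * r * (1 - lam * r ^ 2) - 2 * lam * r * (r ^ 2 + a ^ 2) - 2)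
    (hR : ∀ r, R r = χ ^ 2 * a ^ 2 * L ^ 2 - K * Δ r)
    (hR' : ∀ r, R' r = -(K * Δ' r)) :
    (R r₀ = 0 → R' r₀ = 0 → Δ' r₀ = 0 ∧ K * Δ r₀ = χ ^ 2 * a ^ 2 * L ^ 2) ∧
    (R r₀ = 0 → R' r₀ = 0 →
      (∃ θ ∈ Set.Ioo (0 : ℝ) Real.pi,
        0 ≤ K * (1 + a ^ 2 * lam * Real.cos θ ^ 2) - χ ^ 2 * L ^ 2 / Real.sin θ ^ 2) →
      χ ^ 2 * L ^ 2 ≤ K ∧ Δ r₀ ≤ a ^ 2) := by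
  have hKne : K ≠ 0 := ne_of_gt hK
  constructor
  · intro h1 h2
    rw [hR r₀] at h1
    rw [hR' r₀] at h2
    constructor
    · have : K * Δ' r₀ = 0 := by linarith
      exact (mul_eq_zero.mp this).resolve_left hKne
    · linarith
  · rintro h1 h2 ⟨θ, hθ, hang⟩
    rw [hR r₀] at h1
    have hs : 0 < Real.sin θ := Real.sin_pos_of_pos_of_lt_pi hθ.1 hθ.2
    have hs2 : 0 < Real.sin θ ^ 2 := by positivity
    have hmain : χ ^ 2 * L ^ 2 ≤ K := by
      have h3 : χ ^ 2 * L ^ 2 / Real.sin θ ^ 2 ≤ K * (1 + a ^ 2 * lam * Real.cos θ ^ 2) := by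
        linarith
      have h4 : χ ^ 2 * L ^ 2 ≤ K * (1 + a ^ 2 * lam * Real.cos θ ^ 2) * Real.sin θ ^ 2 := by
        rw [div_le_iff₀ hs2] at h3
        linarith
      have hcs : Real.cos θ ^ 2 = 1 - Real.sin θ ^ 2 := by
        have := Real.sin_sq_add_cos_sq θ; linarith
      have hsle : Real.sin θ ^ 2 ≤ 1 := by
        nlinarith [sq_nonneg (Real.cos θ)]
      -- (1 + μ(1-s)) s ≤ 1 with μ = a²λ ∈ [0,1), s ∈ (0,1]
      have hfact : K * (1 + a ^ 2 * lam * Real.cos θ ^ 2) * Real.sin θ ^ 2 ≤ K := by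
        rw [hcs]
        have hμs : a ^ 2 * lam * Real.sin θ ^ 2 ≤ 1 := by
          nlinarith [mul_nonneg (sq_nonneg a) hlam]
        nlinarith [mul_nonneg hK.le (mul_nonneg (sub_nonneg.mpr hsle)
          (sub_nonneg.mpr hμs))]
      linarith
    refine ⟨hmain, ?_⟩
    have : K * Δ r₀ = χ ^ 2 * a ^ 2 * L ^ 2 := by linarith
    have h5 : K * Δ r₀ ≤ K * a ^ 2 := by nlinarith [sq_nonneg a]
    exact le_of_mul_le_mul_left h5 hK
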